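/- arXiv:0705.1270 — 2 statements merged into one kernel-verified Lean document; each statement's English description precedes it below -/
import Mathlib

section
/- (Theorem B.1(iv)) Suppose the sequential randomization assumption holds: A(j) ⟂ X | (Ā(j-1), L̄(j)) for all j = 0,...,K, where X = (V, (L̄_{ā(K)}(K+1))_{ā(K)}) is the full data. Then for every t with s-1 ≤ t ≤ K and every j with t-s+1 ≤ j ≤ t, the t-specific SRA holds: A^t(j) ⟂ X^t | (Ā^t(t-s+1, j-1), L̄^t(t-s+1, j)), where X^t = (V, Ā(t-s), X_L^t) and X_L^t = (L̄_{ā(t-s+1,t)}(t+1))_{ā(t-s+1,t)} is a measurable function of X. -/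
open Finset
open scoped Classical

noncomputable section

def pr {Ω : Type} [Fintype Ω] (μ : Ω → ℝ) (E : Ω → Prop) : ℝ :=
  ∑ ω, if E ω then μ ω else 0

def cpr {Ω : Type} [Fintype Ω] (μ : Ω → ℝ) (E F : Ω → Prop) : ℝ :=
  pr μ (fun ω => E ω ∧ F ω) / pr μ F

def ex {Ω : Type} [Fintype Ω] (μ : Ω → ℝ) (f : Ω → ℝ) : ℝ :=
  ∑ ω, f ω * μ ω

def cex {Ω : Type} [Fintype Ω] (μ : Ω → ℝ) (f : Ω → ℝ) (F : Ω → Prop) : ℝ :=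
  (∑ ω, if F ω then f ω * μ ω else 0) / pr μ F

/-- t-specific observed history event (values of `(Ā^t(t-s+1,j-1), L̄^t(t-s+1,j))`,
where `L^t(t-s+1) = (Ā(t-s), L̄(t-s+1))`). -/
def tHist {Ω 𝒜 ℒ : Type} (A : ℕ → Ω → 𝒜) (L : ℕ → Ω → ℒ)
    (s t j : ℕ) (ab : ℕ → 𝒜) (lb : ℕ → ℒ) : Ω → Prop := fun ω =>
  (∀ i, t + 1 - s ≤ i → i < j → A i ω = ab i) ∧
  ((∀ i, i < t + 1 - s → A i ω = ab i) ∧ (∀ i, i ≤ t + 1 - s → L i ω = lb i)) ∧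
  (∀ i, t + 1 - s < i → i ≤ j → L i ω = lb i)

/-- The event that the t-specific full data
`X^t = (V, Ā(t-s), (L̄_{Ā(t-s),ā(t-s+1,t)}(t+1))_ā)` takes a given value. -/
def XtEq {Ω 𝒜 ℒ 𝒱 : Type} (A : ℕ → Ω → 𝒜) (CL : (ℕ → 𝒜) → ℕ → Ω → ℒ) (Vv : Ω → 𝒱)
    (s t : ℕ) (v : 𝒱) (ap : ℕ → 𝒜) (xl : (ℕ → 𝒜) → ℕ → ℒ) : Ω → Prop := fun ω =>
  Vv ω = v ∧ (∀ i, i < t + 1 - s → A i ω = ap i) ∧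
  (∀ (ar : ℕ → 𝒜) (jj : ℕ), jj ≤ t + 1 →
    CL (fun i => if i < t + 1 - s then A i ω else ar i) jj ω = xl ar jj)

lemma pr_congr {Ω : Type} [Fintype Ω] (μ : Ω → ℝ) {E E' : Ω → Prop}
    (h : ∀ ω, E ω ↔ E' ω) : pr μ E = pr μ E' := by
  unfold pr
  exact Finset.sum_congr rfl fun ω _ => by rw [propext (h ω)]

lemma pr_zero {Ω : Type} [Fintype Ω] (μ : Ω → ℝ) {E : Ω → Prop}
    (h : ∀ ω, ¬ E ω) : pr μ E = 0 := by
  unfold pr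
  exact Finset.sum_eq_zero fun ω _ => by simp [h ω]

lemma decomp {Ω β : Type} [Fintype Ω] (μ : Ω → ℝ) (P : Ω → Prop) (D : Ω → β) (Φ : β → Prop) :
    pr μ (fun ω => P ω ∧ Φ (D ω)) =
      ∑ x ∈ (Finset.univ.image D).filter Φ, pr μ (fun ω => P ω ∧ D ω = x) := by
  unfold pr
  rw [Finset.sum_comm]
  refine Finset.sum_congr rfl fun ω _ => ?_
  by_cases h : P ω ∧ Φ (D ω)
  · rw [if_pos h]
    have hmem : D ω ∈ (Finset.univ.image D).filter Φ := by
      simp [Finset.mem_filter, h.2]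
    rw [Finset.sum_eq_single_of_mem (D ω) hmem]
    · simp [h.1]
    · intro x hx hne
      rw [if_neg]
      rintro ⟨-, h2⟩
      exact hne h2.symm
  · rw [if_neg h]
    refine (Finset.sum_eq_zero fun x hx => ?_).symm
    rw [if_neg]
    rintro ⟨h1, h2⟩
    simp only [Finset.mem_filter] at hx
    exact h ⟨h1, h2 ▸ hx.2⟩

/-- Theorem B.1(iv): the SRA in the conventional counterfactual
framework implies the t-specific SRAs. -/
theorem tspecific_SRA
    {Ω 𝒜 ℒ 𝒱 : Type} [Fintype Ω]
    (μ : Ω → ℝ) (hμ : ∀ ω, 0 ≤ μ ω) (hsum : ∑ ω, μ ω = 1)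
    (K s : ℕ) (hs : 1 ≤ s) (hsK : s ≤ K + 1)
    (A : ℕ → Ω → 𝒜) (CL : (ℕ → 𝒜) → ℕ → Ω → ℒ) (L : ℕ → Ω → ℒ) (Vv : Ω → 𝒱)
    (hTO : ∀ (a a' : ℕ → 𝒜) (j : ℕ), (∀ i < j, a i = a' i) → ∀ ω, CL a j ω = CL a' j ω)
    (hcons : ∀ j ω, L j ω = CL (fun i => A i ω) j ω)
    (SRA : ∀ j ≤ K, ∀ (a : 𝒜) (v : 𝒱) (x : (ℕ → 𝒜) → ℕ → ℒ) (ab : ℕ → 𝒜) (lb : ℕ → ℒ),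
      pr μ (fun ω => (∀ i < j, A i ω = ab i) ∧ (∀ i ≤ j, L i ω = lb i)) > 0 →
      cpr μ (fun ω => A j ω = a ∧ (Vv ω = v ∧ ∀ (ar : ℕ → 𝒜) (jj : ℕ), CL ar jj ω = x ar jj))
        (fun ω => (∀ i < j, A i ω = ab i) ∧ (∀ i ≤ j, L i ω = lb i)) =
      cpr μ (fun ω => A j ω = a)
        (fun ω => (∀ i < j, A i ω = ab i) ∧ (∀ i ≤ j, L i ω = lb i)) *
      cpr μ (fun ω => Vv ω = v ∧ ∀ (ar : ℕ → 𝒜) (jj : ℕ), CL ar jj ω = x ar jj)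
        (fun ω => (∀ i < j, A i ω = ab i) ∧ (∀ i ≤ j, L i ω = lb i))) :
    ∀ t, s - 1 ≤ t → t ≤ K → ∀ j, t + 1 - s ≤ j → j ≤ t →
    ∀ (a : 𝒜) (v : 𝒱) (ap : ℕ → 𝒜) (xl : (ℕ → 𝒜) → ℕ → ℒ) (ab : ℕ → 𝒜) (lb : ℕ → ℒ),
      pr μ (tHist A L s t j ab lb) > 0 →
      cpr μ (fun ω => A j ω = a ∧ XtEq A CL Vv s t v ap xl ω) (tHist A L s t j ab lb) =
      cpr μ (fun ω => A j ω = a) (tHist A L s t j ab lb) *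
      cpr μ (XtEq A CL Vv s t v ap xl) (tHist A L s t j ab lb) := by
  intro t hst htK j hj1 hj2 a v ap xl ab lb hpos
  have hFeq : tHist A L s t j ab lb =
      (fun ω => (∀ i < j, A i ω = ab i) ∧ (∀ i ≤ j, L i ω = lb i)) := by
    funext ω
    refine propext ?_
    constructor
    · rintro ⟨h1, ⟨h2, h3⟩, h4⟩
      refine ⟨fun i hi => ?_, fun i hi => ?_⟩
      · by_cases hc : i < t + 1 - s
        · exact h2 i hc
        · exact h1 i (le_of_not_gt hc) hi
      · by_cases hc : i ≤ t + 1 - s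
        · exact h3 i hc
        · exact h4 i (lt_of_not_ge hc) hi
    · rintro ⟨h1, h2⟩
      exact ⟨fun i _ hi => h1 i hi,
        ⟨fun i hi => h1 i (lt_of_lt_of_le hi hj1), fun i hi => h2 i (le_trans hi hj1)⟩,
        fun i _ hi => h2 i hi⟩
  rw [hFeq] at hpos ⊢
  set F : Ω → Prop := fun ω => (∀ i < j, A i ω = ab i) ∧ (∀ i ≤ j, L i ω = lb i) with hFdef
  simp only [cpr]
  by_cases hap : ∀ i < t + 1 - s, ab i = ap i
  · -- main case
    set D : Ω → 𝒱 × ((ℕ → 𝒜) → ℕ → ℒ) := fun ω => (Vv ω, fun ar jj => CL ar jj ω) with hD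
    set Φ : 𝒱 × ((ℕ → 𝒜) → ℕ → ℒ) → Prop := fun p => p.1 = v ∧
      ∀ (ar : ℕ → 𝒜) (jj : ℕ), jj ≤ t + 1 →
        p.2 (fun i => if i < t + 1 - s then ab i else ar i) jj = xl ar jj with hΦ
    have hXt : ∀ ω, F ω → (XtEq A CL Vv s t v ap xl ω ↔ Φ (D ω)) := by
      intro ω hF
      have hAab : ∀ i, i < t + 1 - s → A i ω = ab i := fun i hi =>
        hF.1 i (lt_of_lt_of_le hi hj1)
      have hfun : ∀ ar : ℕ → 𝒜,
          (fun i => if i < t + 1 - s then A i ω else ar i) =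
          (fun i => if i < t + 1 - s then ab i else ar i) := by
        intro ar; funext i
        by_cases hc : i < t + 1 - s
        · simp [hc, hAab i hc]
        · simp [hc]
      simp only [XtEq, hΦ, hD]
      constructor
      · rintro ⟨hv, hA, hC⟩
        exact ⟨hv, fun ar jj hjj => by rw [← hfun ar]; exact hC ar jj hjj⟩
      · rintro ⟨hv, hC⟩
        exact ⟨hv, fun i hi => (hAab i hi).trans ((hap i hi)),
          fun ar jj hjj => by rw [hfun ar]; exact hC ar jj hjj⟩
    have hDx : ∀ (x : 𝒱 × ((ℕ → 𝒜) → ℕ → ℒ)) ω,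
        D ω = x ↔ (Vv ω = x.1 ∧ ∀ (ar : ℕ → 𝒜) (jj : ℕ), CL ar jj ω = x.2 ar jj) := by
      intro x ω
      constructor
      · rintro rfl; exact ⟨rfl, fun ar jj => rfl⟩
      · rintro ⟨h1, h2⟩
        have h3 : (fun ar jj => CL ar jj ω) = x.2 :=
          funext fun ar => funext fun jj => h2 ar jj
        simp only [hD]
        exact Prod.ext h1 h3
    have c1 : pr μ (fun ω => (A j ω = a ∧ XtEq A CL Vv s t v ap xl ω) ∧ F ω) =
        pr μ (fun ω => (A j ω = a ∧ F ω) ∧ Φ (D ω)) := by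
      refine pr_congr μ fun ω => ?_
      constructor
      · rintro ⟨⟨ha, hX⟩, hF⟩; exact ⟨⟨ha, hF⟩, (hXt ω hF).1 hX⟩
      · rintro ⟨⟨ha, hF⟩, hPhi⟩; exact ⟨⟨ha, (hXt ω hF).2 hPhi⟩, hF⟩
    have c2 : pr μ (fun ω => XtEq A CL Vv s t v ap xl ω ∧ F ω) =
        pr μ (fun ω => F ω ∧ Φ (D ω)) := by
      refine pr_congr μ fun ω => ?_
      constructor
      · rintro ⟨hX, hF⟩; exact ⟨hF, (hXt ω hF).1 hX⟩
      · rintro ⟨hF, hPhi⟩; exact ⟨(hXt ω hF).2 hPhi, hF⟩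
    rw [c1, c2, decomp μ (fun ω => A j ω = a ∧ F ω) D Φ, decomp μ F D Φ,
      Finset.sum_div, Finset.sum_div, Finset.mul_sum]
    refine Finset.sum_congr rfl fun x hx => ?_
    have h := SRA j (le_trans hj2 htK) a x.1 x.2 ab lb hpos
    simp only [cpr] at h
    have e1 : pr μ (fun ω => (A j ω = a ∧ (Vv ω = x.1 ∧
        ∀ (ar : ℕ → 𝒜) (jj : ℕ), CL ar jj ω = x.2 ar jj)) ∧ F ω) =
        pr μ (fun ω => (A j ω = a ∧ F ω) ∧ D ω = x) := by
      refine pr_congr μ fun ω => ?_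
      constructor
      · rintro ⟨⟨ha, hat⟩, hF⟩; exact ⟨⟨ha, hF⟩, (hDx x ω).2 hat⟩
      · rintro ⟨⟨ha, hF⟩, hd⟩; exact ⟨⟨ha, (hDx x ω).1 hd⟩, hF⟩
    have e2 : pr μ (fun ω => (Vv ω = x.1 ∧
        ∀ (ar : ℕ → 𝒜) (jj : ℕ), CL ar jj ω = x.2 ar jj) ∧ F ω) =
        pr μ (fun ω => F ω ∧ D ω = x) := by
      refine pr_congr μ fun ω => ?_
      constructor
      · rintro ⟨hat, hF⟩; exact ⟨hF, (hDx x ω).2 hat⟩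
      · rintro ⟨hF, hd⟩; exact ⟨(hDx x ω).1 hd, hF⟩
    rw [e1, e2] at h
    exact h
  · -- degenerate case: ap disagrees with ab below t+1-s
    push_neg at hap
    obtain ⟨i0, hi0, hne⟩ := hap
    have hi0j : i0 < j := lt_of_lt_of_le hi0 hj1
    have hz1 : ∀ ω, ¬ ((A j ω = a ∧ XtEq A CL Vv s t v ap xl ω) ∧ F ω) := by
      rintro ω ⟨⟨-, hX⟩, hF⟩
      simp only [XtEq] at hX
      exact hne (((hF.1 i0 hi0j).symm).trans (hX.2.1 i0 hi0))
    have hz2 : ∀ ω, ¬ (XtEq A CL Vv s t v ap xl ω ∧ F ω) := by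
      rintro ω ⟨hX, hF⟩
      simp only [XtEq] at hX
      exact hne (((hF.1 i0 hi0j).symm).trans (hX.2.1 i0 hi0))
    rw [pr_zero μ hz1, pr_zero μ hz2]
    simp
end
end

section
/- (Stabilized weights preserve unbiasedness) Under consistency, temporal ordering, SRA, positivity, and a correctly specified HRMSM m_t(ā(t-s+1,t), V(t-s+1) | β*) = E[Y_{ā(t-s+1,t)}(t+1) | V(t-s+1)], the stabilized IPTW estimating function also has mean zero at β*: E[ h*(Ā(t-s+1,t), V(t-s+1)) · ∏_{j=t-s+1}^{t} g*(A(j) | Ā(t-s+1,j-1), V(t-s+1)) / ∏_{j=t-s+1}^{t} g(A(j) | Ā(j-1), L̄(j)) · (Y(t+1) − m_t(Ā(t-s+1,t), V(t-s+1) | β*)) ] = 0, for any bounded h* depending only on (Ā(t-s+1,t), V(t-s+1)) and any conditional probabilities g* depending only on treatment history after t-s and V(t-s+1). -/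
open Finset
open scoped Classical

noncomputable section

namespace Aux16

variable {Ω : Type} [Fintype Ω]

lemma pr_congr (μ : Ω → ℝ) {E F : Ω → Prop} (h : ∀ ω, E ω ↔ F ω) :
    pr μ E = pr μ F := by
  unfold pr
  refine Finset.sum_congr rfl fun ω _ => ?_
  by_cases hE : E ω
  · rw [if_pos hE, if_pos ((h ω).1 hE)]
  · rw [if_neg hE, if_neg (fun hF => hE ((h ω).2 hF))]

lemma cpr_congr (μ : Ω → ℝ) {E E' F F' : Ω → Prop} (hE : ∀ ω, E ω ↔ E' ω)
    (hF : ∀ ω, F ω ↔ F' ω) : cpr μ E F = cpr μ E' F' := by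
  unfold cpr
  rw [pr_congr μ hF,
    pr_congr μ (E := fun ω => E ω ∧ F ω) (F := fun ω => E' ω ∧ F' ω)
      (fun ω => and_congr (hE ω) (hF ω))]

lemma single_le_pr (μ : Ω → ℝ) (hμ : ∀ ω, 0 ≤ μ ω) {E : Ω → Prop} (ω : Ω) (hE : E ω) :
    μ ω ≤ pr μ E := by
  unfold pr
  have := Finset.single_le_sum (f := fun ω' => if E ω' then μ ω' else 0)
    (fun ω' _ => by by_cases h : E ω' <;> simp [h, hμ ω']) (Finset.mem_univ ω)
  simpa [if_pos hE] using this

lemma pr_pos (μ : Ω → ℝ) (hμ : ∀ ω, 0 ≤ μ ω) {E : Ω → Prop} (ω : Ω) (hE : E ω)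
    (hω : 0 < μ ω) : 0 < pr μ E := lt_of_lt_of_le hω (single_le_pr μ hμ ω hE)

lemma tower (μ : Ω → ℝ) (hμ : ∀ ω, 0 ≤ μ ω) (R : Ω → Ω → Prop)
    (hrefl : ∀ ω, R ω ω) (hsymm : ∀ a b, R a b → R b a)
    (htrans : ∀ a b c, R a b → R b c → R a c) (f : Ω → ℝ) :
    ∑ ω, cex μ f (fun ω' => R ω' ω) * μ ω = ex μ f := by
  have hPeq : ∀ ω ω', R ω' ω → pr μ (fun x => R x ω) = pr μ (fun x => R x ω') := by
    intro ω ω' h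
    exact pr_congr μ fun x => ⟨fun hx => htrans x ω ω' hx (hsymm ω' ω h),
      fun hx => htrans x ω' ω hx h⟩
  have step1 : ∀ ω, cex μ f (fun ω' => R ω' ω) * μ ω
      = ∑ ω', if R ω' ω then f ω' * μ ω' * (μ ω / pr μ (fun x => R x ω)) else 0 := by
    intro ω
    unfold cex
    rw [div_mul_eq_mul_div, Finset.sum_mul, Finset.sum_div]
    refine Finset.sum_congr rfl fun ω' _ => ?_
    by_cases h : R ω' ω
    · rw [if_pos h, if_pos h]; ring
    · rw [if_neg h, if_neg h, zero_mul, zero_div]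
  rw [Finset.sum_congr rfl fun ω _ => step1 ω, Finset.sum_comm]
  unfold ex
  refine Finset.sum_congr rfl fun ω' _ => ?_
  rcases eq_or_lt_of_le (hμ ω') with hz | hpos
  · rw [← hz, mul_zero]
    refine Finset.sum_eq_zero fun ω _ => ?_
    by_cases h : R ω' ω
    · rw [if_pos h]; ring
    · rw [if_neg h]
  · have hP : 0 < pr μ (fun x => R x ω') := pr_pos μ hμ ω' (hrefl ω') hpos
    have hterm : ∀ ω, (if R ω' ω then f ω' * μ ω' * (μ ω / pr μ (fun x => R x ω)) else 0)
        = f ω' * μ ω' / pr μ (fun x => R x ω') * (if R ω' ω then μ ω else 0) := by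
      intro ω
      by_cases h : R ω' ω
      · rw [if_pos h, if_pos h, hPeq ω ω' h]; ring
      · rw [if_neg h, if_neg h, mul_zero]
    rw [Finset.sum_congr rfl fun ω _ => hterm ω, ← Finset.mul_sum]
    have hsum : (∑ ω, if R ω' ω then μ ω else 0) = pr μ (fun x => R x ω') := by
      unfold pr
      refine Finset.sum_congr rfl fun ω _ => ?_
      by_cases h : R ω' ω
      · rw [if_pos h, if_pos (hsymm ω' ω h)]
      · rw [if_neg h, if_neg (fun hx => h (hsymm ω ω' hx))]
    rw [hsum, div_mul_cancel₀ _ (ne_of_gt hP)]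

lemma cex_congr (μ : Ω → ℝ) {f g : Ω → ℝ} {F : Ω → Prop} (h : ∀ ω, F ω → f ω = g ω) :
    cex μ f F = cex μ g F := by
  unfold cex
  congr 1
  refine Finset.sum_congr rfl fun ω _ => ?_
  by_cases hF : F ω
  · rw [if_pos hF, if_pos hF, h ω hF]
  · rw [if_neg hF, if_neg hF]

lemma cex_const_mul (μ : Ω → ℝ) (c : ℝ) (f : Ω → ℝ) (F : Ω → Prop) :
    cex μ (fun ω => c * f ω) F = c * cex μ f F := by
  unfold cex
  rw [← mul_div_assoc, Finset.mul_sum]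
  congr 1
  refine Finset.sum_congr rfl fun ω _ => ?_
  by_cases hF : F ω
  · rw [if_pos hF, if_pos hF]; ring
  · rw [if_neg hF, if_neg hF, mul_zero]

lemma cex_sub_const (μ : Ω → ℝ) (f : Ω → ℝ) (c : ℝ) {F : Ω → Prop} (h : pr μ F ≠ 0) :
    cex μ (fun ω => f ω - c) F = cex μ f F - c := by
  unfold cex
  have e1 : (∑ ω, if F ω then (f ω - c) * μ ω else 0)
      = (∑ ω, if F ω then f ω * μ ω else 0) - c * pr μ F := by
    unfold pr
    rw [Finset.mul_sum, ← Finset.sum_sub_distrib]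
    refine Finset.sum_congr rfl fun ω _ => ?_
    by_cases hF : F ω
    · rw [if_pos hF, if_pos hF, if_pos hF]; ring
    · rw [if_neg hF, if_neg hF, if_neg hF, mul_zero, sub_zero]
  rw [e1, sub_div, mul_div_assoc, div_self h, mul_one]

lemma cex_eq_zero (μ : Ω → ℝ) {f : Ω → ℝ} {F : Ω → Prop}
    (h : (∑ ω, if F ω then f ω * μ ω else 0) = 0) : cex μ f F = 0 := by
  unfold cex
  rw [h, zero_div]

lemma step_cancel {ξ : Type} (μ : Ω → ℝ) (hμ : ∀ ω, 0 ≤ μ ω)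
    (B E : Ω → Prop) (X : Ω → ξ) (g Ψ : Ω → ℝ)
    (hq : 0 < cpr μ E B)
    (hSRA : ∀ x : ξ, pr μ (fun ω => (E ω ∧ X ω = x) ∧ B ω)
      = cpr μ E B * pr μ (fun ω => X ω = x ∧ B ω))
    (hg : ∀ ω, B ω → E ω → g ω = cpr μ E B)
    (hΨ : ∀ ω ω', B ω → B ω' → X ω = X ω' → Ψ ω = Ψ ω') :
    cex μ (fun ω => (if E ω then Ψ ω else 0) / g ω) B = cex μ Ψ B := by
  classical
  set q := cpr μ E B with hqd
  set c : Ω → ℝ := fun ω => pr μ (fun ω' => X ω' = X ω ∧ B ω') with hcd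
  have hcle : ∀ ω, B ω → μ ω ≤ c ω := fun ω hB => single_le_pr μ hμ ω ⟨rfl, hB⟩
  have hczero : ∀ ω, B ω → c ω = 0 → μ ω = 0 := fun ω hB h0 =>
    le_antisymm (h0 ▸ hcle ω hB) (hμ ω)
  have hd : ∀ ω, pr μ (fun ω' => (E ω' ∧ X ω' = X ω) ∧ B ω') = q * c ω := fun ω => hSRA (X ω)
  have main : (∑ ω, if E ω ∧ B ω then Ψ ω * μ ω else 0)
      = q * ∑ ω, if B ω then Ψ ω * μ ω else 0 := by
    have hT1 : ∀ ω, (∑ ω', (if B ω then μ ω / c ω else 0) *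
        (if (E ω' ∧ X ω' = X ω) ∧ B ω' then Ψ ω' * μ ω' else 0))
        = (if B ω then q * (Ψ ω * μ ω) else 0) := by
      intro ω
      by_cases hB : B ω
      · rw [if_pos hB, ← Finset.mul_sum, if_pos hB]
        have hin : (∑ ω', if (E ω' ∧ X ω' = X ω) ∧ B ω' then Ψ ω' * μ ω' else 0)
            = Ψ ω * (q * c ω) := by
          rw [← hd ω]
          unfold pr
          rw [Finset.mul_sum]
          refine Finset.sum_congr rfl fun ω' _ => ?_
          by_cases h : (E ω' ∧ X ω' = X ω) ∧ B ω'
          · rw [if_pos h, if_pos h, hΨ ω' ω h.2 hB h.1.2]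
          · rw [if_neg h, if_neg h, mul_zero]
        rw [hin]
        by_cases hc0 : c ω = 0
        · have hμ0 : μ ω = 0 := hczero ω hB hc0
          rw [hc0, hμ0]; ring
        · field_simp
      · rw [if_neg hB, if_neg hB]
        refine Finset.sum_eq_zero fun ω' _ => zero_mul _
    have hT2 : ∀ ω', (∑ ω, (if B ω then μ ω / c ω else 0) *
        (if (E ω' ∧ X ω' = X ω) ∧ B ω' then Ψ ω' * μ ω' else 0))
        = (if E ω' ∧ B ω' then Ψ ω' * μ ω' else 0) := by
      intro ω'
      by_cases hEB : E ω' ∧ B ω'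
      · have hterm : ∀ ω, (if B ω then μ ω / c ω else 0) *
            (if (E ω' ∧ X ω' = X ω) ∧ B ω' then Ψ ω' * μ ω' else 0)
            = (if X ω = X ω' ∧ B ω then μ ω else 0) * (Ψ ω' * μ ω' / c ω') := by
          intro ω
          by_cases hB : B ω
          · by_cases hX : X ω' = X ω
            · rw [if_pos hB, if_pos ⟨⟨hEB.1, hX⟩, hEB.2⟩, if_pos ⟨hX.symm, hB⟩]
              have hcc : c ω = c ω' := by
                rw [hcd]
                exact pr_congr μ fun ω'' => by rw [hX]
              rw [hcc]; ring
            · have h1 : (if (E ω' ∧ X ω' = X ω) ∧ B ω' then Ψ ω' * μ ω' else 0) = 0 :=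
                if_neg (fun h => hX h.1.2)
              have h2 : (if X ω = X ω' ∧ B ω then μ ω else 0) = 0 :=
                if_neg (fun h => hX h.1.symm)
              rw [h1, h2, mul_zero, zero_mul]
          · have h2 : (if X ω = X ω' ∧ B ω then μ ω else 0) = 0 :=
              if_neg (fun h => hB h.2)
            rw [if_neg hB, h2, zero_mul, zero_mul]
        rw [Finset.sum_congr rfl fun ω _ => hterm ω, ← Finset.sum_mul]
        have hsum : (∑ ω, if X ω = X ω' ∧ B ω then μ ω else 0) = c ω' := by
          rw [hcd]
          simp only [pr]
          exact Finset.sum_congr rfl fun x _ => by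
            by_cases h : X x = X ω' ∧ B x
            · rw [if_pos h, if_pos h]
            · rw [if_neg h, if_neg h]
        rw [hsum, if_pos hEB]
        by_cases hc0 : c ω' = 0
        · have hμ0 : μ ω' = 0 := hczero ω' hEB.2 hc0
          rw [hc0, hμ0]; ring
        · field_simp
        -- goal: c ω' * (Ψ ω' * μ ω' / c ω') = Ψ ω' * μ ω'
      · refine (Finset.sum_eq_zero fun ω _ => ?_).trans (if_neg hEB).symm
        have h0 : (if (E ω' ∧ X ω' = X ω) ∧ B ω' then Ψ ω' * μ ω' else 0) = 0 :=
          if_neg (fun h => hEB ⟨h.1.1, h.2⟩)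
        rw [h0, mul_zero]
    calc (∑ ω, if E ω ∧ B ω then Ψ ω * μ ω else 0)
        = ∑ ω', ∑ ω, (if B ω then μ ω / c ω else 0) *
            (if (E ω' ∧ X ω' = X ω) ∧ B ω' then Ψ ω' * μ ω' else 0) := by
          refine Finset.sum_congr rfl fun ω' _ => (hT2 ω').symm
      _ = ∑ ω, ∑ ω', (if B ω then μ ω / c ω else 0) *
            (if (E ω' ∧ X ω' = X ω) ∧ B ω' then Ψ ω' * μ ω' else 0) := Finset.sum_comm
      _ = ∑ ω, (if B ω then q * (Ψ ω * μ ω) else 0) := by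
          refine Finset.sum_congr rfl fun ω _ => hT1 ω
      _ = q * ∑ ω, if B ω then Ψ ω * μ ω else 0 := by
          rw [Finset.mul_sum]
          refine Finset.sum_congr rfl fun ω _ => ?_
          by_cases hB : B ω
          · rw [if_pos hB, if_pos hB]
          · rw [if_neg hB, if_neg hB, mul_zero]
  have hnum : (∑ ω, if B ω then ((if E ω then Ψ ω else 0) / g ω) * μ ω else 0)
      = ∑ ω, if B ω then Ψ ω * μ ω else 0 := by
    have hterm : ∀ ω, (if B ω then ((if E ω then Ψ ω else 0) / g ω) * μ ω else 0)
        = (if E ω ∧ B ω then Ψ ω * μ ω else 0) / q := by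
      intro ω
      by_cases hB : B ω
      · by_cases hE : E ω
        · rw [if_pos hB, if_pos hE, if_pos ⟨hE, hB⟩, hg ω hB hE, div_mul_eq_mul_div]
        · rw [if_pos hB, if_neg hE, if_neg (fun h => hE h.1), zero_div, zero_mul, zero_div]
      · rw [if_neg hB, if_neg (fun h => hB h.2), zero_div]
    rw [Finset.sum_congr rfl fun ω _ => hterm ω, ← Finset.sum_div, main,
      mul_div_cancel_left₀ _ (ne_of_gt hq)]
  unfold cex
  rw [hnum]

lemma pattern_zero {𝒜 ℒ ξ : Type} (μ : Ω → ℝ) (hμ : ∀ ω, 0 ≤ μ ω)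
    (A : ℕ → Ω → 𝒜) (L : ℕ → Ω → ℒ) (X : Ω → ξ)
    (r t : ℕ) (hrt : r ≤ t)
    (p : ℕ → 𝒜) (gg : ℕ → Ω → ℝ) (Φ : Ω → ℝ)
    (hbase : ex μ Φ = 0)
    (hΦ : ∀ ω ω', (∀ i < r, A i ω = A i ω') → (∀ i ≤ r, L i ω = L i ω') →
      X ω = X ω' → Φ ω = Φ ω')
    (hSRA : ∀ k, r ≤ k → k ≤ t → ∀ ω, 0 < μ ω → ∀ x : ξ,
      pr μ (fun ω' => (A k ω' = p k ∧ X ω' = x) ∧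
          ((∀ i < k, A i ω' = A i ω) ∧ (∀ i ≤ k, L i ω' = L i ω)))
        = cpr μ (fun ω' => A k ω' = p k)
            (fun ω' => (∀ i < k, A i ω' = A i ω) ∧ (∀ i ≤ k, L i ω' = L i ω)) *
          pr μ (fun ω' => X ω' = x ∧ ((∀ i < k, A i ω' = A i ω) ∧ (∀ i ≤ k, L i ω' = L i ω))))
    (hPOS : ∀ k, r ≤ k → k ≤ t → ∀ ω, 0 < μ ω →
      0 < cpr μ (fun ω' => A k ω' = p k)
        (fun ω' => (∀ i < k, A i ω' = A i ω) ∧ (∀ i ≤ k, L i ω' = L i ω)))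
    (hval : ∀ k, r ≤ k → k ≤ t → ∀ ω ω',
      ((∀ i < k, A i ω' = A i ω) ∧ (∀ i ≤ k, L i ω' = L i ω)) → A k ω' = p k →
      gg k ω' = cpr μ (fun ω'' => A k ω'' = p k)
        (fun ω'' => (∀ i < k, A i ω'' = A i ω) ∧ (∀ i ≤ k, L i ω'' = L i ω)))
    (hcongr : ∀ j, r ≤ j → j ≤ t → ∀ ω ω', (∀ i ≤ j, A i ω' = A i ω) →
      (∀ i ≤ j, L i ω' = L i ω) → gg j ω' = gg j ω) :
    ex μ (fun ω => (if ∀ j, r ≤ j → j < t + 1 → A j ω = p j then (1:ℝ) else 0) * Φ ω /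
      ∏ j ∈ Finset.Ico r (t + 1), gg j ω) = 0 := by
  classical
  have key : ∀ k, r ≤ k → k ≤ t + 1 →
      ex μ (fun ω => (if ∀ j, r ≤ j → j < k → A j ω = p j then (1:ℝ) else 0) * Φ ω /
        ∏ j ∈ Finset.Ico r k, gg j ω) = 0 := by
    intro k hk
    induction k, hk using Nat.le_induction with
    | base =>
      intro _
      have he : (fun ω => (if ∀ j, r ≤ j → j < r → A j ω = p j then (1:ℝ) else 0) * Φ ω /
          ∏ j ∈ Finset.Ico r r, gg j ω) = Φ := by
        funext ω
        rw [if_pos (fun j h1 h2 => absurd (lt_of_le_of_lt h1 h2) (lt_irrefl r)),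
          Finset.Ico_self, Finset.prod_empty, one_mul, div_one]
      rw [he]
      exact hbase
    | succ k hk IH =>
      intro hk1
      have hkt : k ≤ t := by omega
      have hDk := IH (by omega)
      refine Eq.trans ?_ hDk
      have hRrefl : ∀ ω : Ω, ((∀ i < k, A i ω = A i ω) ∧ (∀ i ≤ k, L i ω = L i ω)) :=
        fun ω => ⟨fun _ _ => rfl, fun _ _ => rfl⟩
      have hRsymm : ∀ a b : Ω, ((∀ i < k, A i a = A i b) ∧ (∀ i ≤ k, L i a = L i b)) →
          ((∀ i < k, A i b = A i a) ∧ (∀ i ≤ k, L i b = L i a)) :=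
        fun a b h => ⟨fun i hi => (h.1 i hi).symm, fun i hi => (h.2 i hi).symm⟩
      have hRtrans : ∀ a b c : Ω, ((∀ i < k, A i a = A i b) ∧ (∀ i ≤ k, L i a = L i b)) →
          ((∀ i < k, A i b = A i c) ∧ (∀ i ≤ k, L i b = L i c)) →
          ((∀ i < k, A i a = A i c) ∧ (∀ i ≤ k, L i a = L i c)) :=
        fun a b c h1 h2 => ⟨fun i hi => (h1.1 i hi).trans (h2.1 i hi),
          fun i hi => (h1.2 i hi).trans (h2.2 i hi)⟩
      conv_lhs => rw [← tower μ hμ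
        (fun ω' ω => (∀ i < k, A i ω' = A i ω) ∧ (∀ i ≤ k, L i ω' = L i ω))
        hRrefl hRsymm hRtrans]
      conv_rhs => rw [← tower μ hμ
        (fun ω' ω => (∀ i < k, A i ω' = A i ω) ∧ (∀ i ≤ k, L i ω' = L i ω))
        hRrefl hRsymm hRtrans]
      refine Finset.sum_congr rfl fun ω _ => ?_
      rcases eq_or_lt_of_le (hμ ω) with hzz | hpos
      · rw [← hzz, mul_zero, mul_zero]
      · congr 1
        beta_reduce
        have hq : 0 < cpr μ (fun ω' => A k ω' = p k)
            (fun ω' => (∀ i < k, A i ω' = A i ω) ∧ (∀ i ≤ k, L i ω' = L i ω)) :=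
          hPOS k hk hkt ω hpos
        have hWconst : ∀ ω', ((∀ i < k, A i ω' = A i ω) ∧ (∀ i ≤ k, L i ω' = L i ω)) →
            (∏ j ∈ Finset.Ico r k, gg j ω') = ∏ j ∈ Finset.Ico r k, gg j ω := by
          intro ω' hB'
          refine Finset.prod_congr rfl fun j hj => ?_
          obtain ⟨hj1, hj2⟩ := Finset.mem_Ico.mp hj
          exact hcongr j hj1 (by omega) ω ω' (fun i hi => hB'.1 i (by omega))
            (fun i hi => hB'.2 i (by omega))
        have hIiff : ∀ ω', ((∀ i < k, A i ω' = A i ω) ∧ (∀ i ≤ k, L i ω' = L i ω)) →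
            ((∀ j, r ≤ j → j < k → A j ω' = p j) ↔ (∀ j, r ≤ j → j < k → A j ω = p j)) := by
          intro ω' hB'
          constructor
          · intro h j h1 h2; rw [← hB'.1 j h2]; exact h j h1 h2
          · intro h j h1 h2; rw [hB'.1 j h2]; exact h j h1 h2
        have eL : cex μ (fun ω' => (if ∀ j, r ≤ j → j < k + 1 → A j ω' = p j then (1:ℝ) else 0) *
              Φ ω' / ∏ j ∈ Finset.Ico r (k + 1), gg j ω')
              (fun ω' => (∀ i < k, A i ω' = A i ω) ∧ (∀ i ≤ k, L i ω' = L i ω))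
            = ((if ∀ j, r ≤ j → j < k → A j ω = p j then (1:ℝ) else 0) /
                ∏ j ∈ Finset.Ico r k, gg j ω) *
              cex μ Φ (fun ω' => (∀ i < k, A i ω' = A i ω) ∧ (∀ i ≤ k, L i ω' = L i ω)) := by
          have c1 : cex μ (fun ω' => (if ∀ j, r ≤ j → j < k + 1 → A j ω' = p j then (1:ℝ) else 0) *
                Φ ω' / ∏ j ∈ Finset.Ico r (k + 1), gg j ω')
                (fun ω' => (∀ i < k, A i ω' = A i ω) ∧ (∀ i ≤ k, L i ω' = L i ω))
              = cex μ (fun ω' => ((if ∀ j, r ≤ j → j < k → A j ω = p j then (1:ℝ) else 0) /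
                  ∏ j ∈ Finset.Ico r k, gg j ω) *
                  ((if A k ω' = p k then Φ ω' else 0) / gg k ω'))
                (fun ω' => (∀ i < k, A i ω' = A i ω) ∧ (∀ i ≤ k, L i ω' = L i ω)) := by
            refine cex_congr μ fun ω' hB' => ?_
            rw [Finset.prod_Ico_succ_top hk, hWconst ω' hB']
            have hind : (if ∀ j, r ≤ j → j < k + 1 → A j ω' = p j then (1:ℝ) else 0)
                = (if ∀ j, r ≤ j → j < k → A j ω = p j then (1:ℝ) else 0) *
                  (if A k ω' = p k then (1:ℝ) else 0) := by
              by_cases h2 : A k ω' = p k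
              · rw [if_pos h2, mul_one]
                by_cases h1 : ∀ j, r ≤ j → j < k → A j ω = p j
                · rw [if_pos h1, if_pos]
                  intro j hj hjk
                  rcases Nat.lt_succ_iff_lt_or_eq.mp hjk with h' | h'
                  · rw [hB'.1 j h']; exact h1 j hj h'
                  · subst h'; exact h2
                · rw [if_neg h1, if_neg]
                  intro hall
                  exact h1 fun j hj hjk => (hB'.1 j hjk).symm.trans (hall j hj (by omega))
              · rw [if_neg h2, mul_zero, if_neg (fun h => h2 (h k hk (Nat.lt_succ_self k)))]
            rw [hind]
            by_cases h2 : A k ω' = p k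
            · rw [if_pos h2, if_pos h2, mul_one]
              exact mul_div_mul_comm _ _ _ _
            · rw [if_neg h2, if_neg h2, mul_zero, zero_mul, zero_div, zero_div, mul_zero]
          rw [c1, cex_const_mul]
          congr 1
          exact step_cancel μ hμ
            (fun ω' => (∀ i < k, A i ω' = A i ω) ∧ (∀ i ≤ k, L i ω' = L i ω))
            (fun ω' => A k ω' = p k) X (gg k) Φ hq
            (fun x => hSRA k hk hkt ω hpos x)
            (fun ω' hB' hE' => hval k hk hkt ω ω' hB' hE')
            (fun ω' ω'' hB' hB'' hXX => hΦ ω' ω''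
              (fun i hi => (hB'.1 i (by omega)).trans (hB''.1 i (by omega)).symm)
              (fun i hi => (hB'.2 i (by omega)).trans (hB''.2 i (by omega)).symm) hXX)
        have eR : cex μ (fun ω' => (if ∀ j, r ≤ j → j < k → A j ω' = p j then (1:ℝ) else 0) *
              Φ ω' / ∏ j ∈ Finset.Ico r k, gg j ω')
              (fun ω' => (∀ i < k, A i ω' = A i ω) ∧ (∀ i ≤ k, L i ω' = L i ω))
            = ((if ∀ j, r ≤ j → j < k → A j ω = p j then (1:ℝ) else 0) /
                ∏ j ∈ Finset.Ico r k, gg j ω) *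
              cex μ Φ (fun ω' => (∀ i < k, A i ω' = A i ω) ∧ (∀ i ≤ k, L i ω' = L i ω)) := by
          have c1 : cex μ (fun ω' => (if ∀ j, r ≤ j → j < k → A j ω' = p j then (1:ℝ) else 0) *
                Φ ω' / ∏ j ∈ Finset.Ico r k, gg j ω')
                (fun ω' => (∀ i < k, A i ω' = A i ω) ∧ (∀ i ≤ k, L i ω' = L i ω))
              = cex μ (fun ω' => ((if ∀ j, r ≤ j → j < k → A j ω = p j then (1:ℝ) else 0) /
                  ∏ j ∈ Finset.Ico r k, gg j ω) * Φ ω')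
                (fun ω' => (∀ i < k, A i ω' = A i ω) ∧ (∀ i ≤ k, L i ω' = L i ω)) := by
            refine cex_congr μ fun ω' hB' => ?_
            rw [hWconst ω' hB', if_congr (hIiff ω' hB') rfl rfl, mul_div_right_comm]
          rw [c1, cex_const_mul]
        rw [eL, eR]
  exact key (t + 1) (by omega) (le_refl _)

end Aux16

/-- stabilized weights preserve the unbiasedness of the IPTW
estimating function for a correctly specified (stratified) HRMSM. -/
theorem hrmsm_stabilized_iptw_unbiased
    {Ω 𝒜 ℒ 𝒱 : Type} [Fintype Ω]
    (μ : Ω → ℝ) (hμ : ∀ ω, 0 ≤ μ ω) (hsum : ∑ ω, μ ω = 1)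
    (K s : ℕ) (hs : 1 ≤ s) (hsK : s ≤ K + 1)
    (A : ℕ → Ω → 𝒜) (CL : (ℕ → 𝒜) → ℕ → Ω → ℒ) (L : ℕ → Ω → ℒ) (Y : ℒ → ℝ)
    (hTO : ∀ (a a' : ℕ → 𝒜) (j : ℕ), (∀ i < j, a i = a' i) → ∀ ω, CL a j ω = CL a' j ω)
    (hcons : ∀ j ω, L j ω = CL (fun i => A i ω) j ω)
    (SRA : ∀ j ≤ K, ∀ (a : 𝒜) (x : (ℕ → 𝒜) → ℕ → ℒ) (ab : ℕ → 𝒜) (lb : ℕ → ℒ),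
      pr μ (fun ω => (∀ i < j, A i ω = ab i) ∧ (∀ i ≤ j, L i ω = lb i)) > 0 →
      cpr μ (fun ω => A j ω = a ∧ ∀ (ar : ℕ → 𝒜) (jj : ℕ), CL ar jj ω = x ar jj)
        (fun ω => (∀ i < j, A i ω = ab i) ∧ (∀ i ≤ j, L i ω = lb i)) =
      cpr μ (fun ω => A j ω = a)
        (fun ω => (∀ i < j, A i ω = ab i) ∧ (∀ i ≤ j, L i ω = lb i)) *
      cpr μ (fun ω => ∀ (ar : ℕ → 𝒜) (jj : ℕ), CL ar jj ω = x ar jj)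
        (fun ω => (∀ i < j, A i ω = ab i) ∧ (∀ i ≤ j, L i ω = lb i)))
    (t : ℕ) (ht1 : s - 1 ≤ t) (ht2 : t ≤ K)
    (POS : ∀ j, t + 1 - s ≤ j → j ≤ t → ∀ (a : 𝒜) (ω : Ω), μ ω > 0 →
      cpr μ (fun ω' => A j ω' = a)
        (fun ω' => (∀ i < j, A i ω' = A i ω) ∧ (∀ i ≤ j, L i ω' = L i ω)) > 0)
    (V : Ω → 𝒱)
    (hV : ∀ ω ω', (∀ i < t + 1 - s, A i ω = A i ω') →
      (∀ i ≤ t + 1 - s, L i ω = L i ω') → V ω = V ω')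
    (m : (ℕ → 𝒜) → 𝒱 → ℝ)
    (hm : ∀ (a a' : ℕ → 𝒜) (v : 𝒱), (∀ i, t + 1 - s ≤ i → i ≤ t → a i = a' i) →
      m a v = m a' v)
    (hmodel : ∀ (ab : ℕ → 𝒜) (v : 𝒱), pr μ (fun ω => V ω = v) > 0 →
      cex μ (fun ω => Y (CL (fun i => if i < t + 1 - s then A i ω else ab i) (t + 1) ω))
        (fun ω => V ω = v) = m ab v)
    (hstar : (ℕ → 𝒜) → 𝒱 → ℝ)
    (hhstar : ∀ (a a' : ℕ → 𝒜) (v : 𝒱), (∀ i, t + 1 - s ≤ i → i ≤ t → a i = a' i) →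
      hstar a v = hstar a' v)
    (gstar : ℕ → 𝒜 → (ℕ → 𝒜) → 𝒱 → ℝ)
    (hgstar_nonneg : ∀ (j : ℕ) (a : 𝒜) (ap : ℕ → 𝒜) (v : 𝒱), 0 ≤ gstar j a ap v)
    (hgstar_dep : ∀ (j : ℕ) (a : 𝒜) (ap ap' : ℕ → 𝒜) (v : 𝒱),
      (∀ i, t + 1 - s ≤ i → i < j → ap i = ap' i) → gstar j a ap v = gstar j a ap' v) :
    ex μ (fun ω => hstar (fun i => A i ω) (V ω) *
      (∏ j ∈ Finset.Ico (t + 1 - s) (t + 1), gstar j (A j ω) (fun i => A i ω) (V ω)) /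
      (∏ j ∈ Finset.Ico (t + 1 - s) (t + 1),
        cpr μ (fun ω' => A j ω' = A j ω)
          (fun ω' => (∀ i < j, A i ω' = A i ω) ∧ (∀ i ≤ j, L i ω' = L i ω))) *
      (Y (L (t + 1) ω) - m (fun i => A i ω) (V ω))) = 0 := by

  classical
  set r := t + 1 - s with hr
  have hrt : r ≤ t := by omega
  rw [← Aux16.tower μ hμ (fun ω' ω => ∀ j, r ≤ j → j < t + 1 → A j ω' = A j ω)
    (fun ω j _ _ => rfl)
    (fun a b h j h1 h2 => (h j h1 h2).symm)
    (fun a b c hab hbc j h1 h2 => (hab j h1 h2).trans (hbc j h1 h2))]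
  refine Finset.sum_eq_zero fun ω _ => ?_
  rcases eq_or_lt_of_le (hμ ω) with hz | hpos
  · rw [← hz, mul_zero]
  · beta_reduce
    rw [mul_eq_zero]
    left
    -- the base case: the model is correctly specified
    have hbase : ex μ (fun ω' => (hstar (fun j => A j ω) (V ω') *
        ∏ j ∈ Finset.Ico r (t + 1), gstar j (A j ω) (fun j => A j ω) (V ω')) *
        (Y (CL (fun i => if i < r then A i ω' else A i ω) (t + 1) ω') -
          m (fun j => A j ω) (V ω'))) = 0 := by
      rw [← Aux16.tower μ hμ (fun ω1 ω2 => V ω1 = V ω2) (fun _ => rfl)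
        (fun a b h => h.symm) (fun a b c h1 h2 => h1.trans h2)]
      refine Finset.sum_eq_zero fun ω₀ _ => ?_
      rcases eq_or_lt_of_le (hμ ω₀) with hz0 | hpos0
      · rw [← hz0, mul_zero]
      · beta_reduce
        rw [mul_eq_zero]
        left
        have hpr : 0 < pr μ (fun ω' => V ω' = V ω₀) := Aux16.pr_pos μ hμ ω₀ rfl hpos0
        have c1 : cex μ (fun ω' => (hstar (fun j => A j ω) (V ω') *
              ∏ j ∈ Finset.Ico r (t + 1), gstar j (A j ω) (fun j => A j ω) (V ω')) *
              (Y (CL (fun i => if i < r then A i ω' else A i ω) (t + 1) ω') -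
                m (fun j => A j ω) (V ω'))) (fun ω' => V ω' = V ω₀)
            = cex μ (fun ω' => (hstar (fun j => A j ω) (V ω₀) *
              ∏ j ∈ Finset.Ico r (t + 1), gstar j (A j ω) (fun j => A j ω) (V ω₀)) *
              (Y (CL (fun i => if i < r then A i ω' else A i ω) (t + 1) ω') -
                m (fun j => A j ω) (V ω₀))) (fun ω' => V ω' = V ω₀) :=
          Aux16.cex_congr μ fun ω' hV' => by rw [hV']
        have hm0 := hmodel (fun j => A j ω) (V ω₀) hpr
        rw [c1, Aux16.cex_const_mul, Aux16.cex_sub_const μ _ _ (ne_of_gt hpr), hm0,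
          sub_self, mul_zero]
    -- measurability of the integrand w.r.t. (A(<r), L(≤r), X)
    have hΦm : ∀ ω' ω'' : Ω, (∀ i < r, A i ω' = A i ω'') → (∀ i ≤ r, L i ω' = L i ω'') →
        (fun (ar : ℕ → 𝒜) (jj : ℕ) => CL ar jj ω') = (fun ar jj => CL ar jj ω'') →
        ((hstar (fun j => A j ω) (V ω') *
          ∏ j ∈ Finset.Ico r (t + 1), gstar j (A j ω) (fun j => A j ω) (V ω')) *
          (Y (CL (fun i => if i < r then A i ω' else A i ω) (t + 1) ω') -
            m (fun j => A j ω) (V ω')))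
        = ((hstar (fun j => A j ω) (V ω'') *
          ∏ j ∈ Finset.Ico r (t + 1), gstar j (A j ω) (fun j => A j ω) (V ω'')) *
          (Y (CL (fun i => if i < r then A i ω'' else A i ω) (t + 1) ω'') -
            m (fun j => A j ω) (V ω''))) := by
      intro ω' ω'' hA hL hX
      have hVe : V ω' = V ω'' := hV ω' ω'' hA hL
      have hCL : CL (fun i => if i < r then A i ω' else A i ω) (t + 1) ω'
          = CL (fun i => if i < r then A i ω'' else A i ω) (t + 1) ω'' := by
        have h1 : CL (fun i => if i < r then A i ω' else A i ω) (t + 1) ω'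
            = CL (fun i => if i < r then A i ω' else A i ω) (t + 1) ω'' :=
          congrFun (congrFun hX (fun i => if i < r then A i ω' else A i ω)) (t + 1)
        rw [h1]
        refine hTO _ _ (t + 1) (fun i hi => ?_) ω''
        by_cases h : i < r
        · rw [if_pos h, if_pos h]
          exact hA i h
        · rw [if_neg h, if_neg h]
      rw [hVe, hCL]
    -- SRA in the abstract form
    have hSRA' : ∀ k, r ≤ k → k ≤ t → ∀ ω₁ : Ω, 0 < μ ω₁ → ∀ x : (ℕ → 𝒜) → ℕ → ℒ,
        pr μ (fun ω' => (A k ω' = A k ω ∧ (fun (ar : ℕ → 𝒜) (jj : ℕ) => CL ar jj ω') = x) ∧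
            ((∀ i < k, A i ω' = A i ω₁) ∧ (∀ i ≤ k, L i ω' = L i ω₁)))
          = cpr μ (fun ω' => A k ω' = A k ω)
              (fun ω' => (∀ i < k, A i ω' = A i ω₁) ∧ (∀ i ≤ k, L i ω' = L i ω₁)) *
            pr μ (fun ω' => (fun (ar : ℕ → 𝒜) (jj : ℕ) => CL ar jj ω') = x ∧
              ((∀ i < k, A i ω' = A i ω₁) ∧ (∀ i ≤ k, L i ω' = L i ω₁))) := by
      intro k hk1 hk2 ω₁ hω₁ x
      have hBpos : pr μ (fun ω' => (∀ i < k, A i ω' = A i ω₁) ∧ (∀ i ≤ k, L i ω' = L i ω₁)) > 0 :=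
        Aux16.pr_pos μ hμ ω₁ ⟨fun _ _ => rfl, fun _ _ => rfl⟩ hω₁
      have hS := SRA k (by omega) (A k ω) x (fun i => A i ω₁) (fun i => L i ω₁) hBpos
      unfold cpr at hS ⊢
      have e1 : pr μ (fun ω' => (A k ω' = A k ω ∧ (fun (ar : ℕ → 𝒜) (jj : ℕ) => CL ar jj ω') = x) ∧
            ((∀ i < k, A i ω' = A i ω₁) ∧ (∀ i ≤ k, L i ω' = L i ω₁)))
          = pr μ (fun ω' => (A k ω' = A k ω ∧ ∀ ar jj, CL ar jj ω' = x ar jj) ∧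
            ((∀ i < k, A i ω' = A i ω₁) ∧ (∀ i ≤ k, L i ω' = L i ω₁))) :=
        Aux16.pr_congr μ fun ω' => by
          constructor
          · rintro ⟨⟨h1, h2⟩, h3⟩
            exact ⟨⟨h1, fun ar jj => congrFun (congrFun h2 ar) jj⟩, h3⟩
          · rintro ⟨⟨h1, h2⟩, h3⟩
            exact ⟨⟨h1, funext fun ar => funext fun jj => h2 ar jj⟩, h3⟩
      have e2 : pr μ (fun ω' => (fun (ar : ℕ → 𝒜) (jj : ℕ) => CL ar jj ω') = x ∧
            ((∀ i < k, A i ω' = A i ω₁) ∧ (∀ i ≤ k, L i ω' = L i ω₁)))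
          = pr μ (fun ω' => (∀ ar jj, CL ar jj ω' = x ar jj) ∧
            ((∀ i < k, A i ω' = A i ω₁) ∧ (∀ i ≤ k, L i ω' = L i ω₁))) :=
        Aux16.pr_congr μ fun ω' => by
          constructor
          · rintro ⟨h2, h3⟩
            exact ⟨fun ar jj => congrFun (congrFun h2 ar) jj, h3⟩
          · rintro ⟨h2, h3⟩
            exact ⟨funext fun ar => funext fun jj => h2 ar jj, h3⟩
      rw [e1, e2]
      have hPB : pr μ (fun ω' => (∀ i < k, A i ω' = A i ω₁) ∧ (∀ i ≤ k, L i ω' = L i ω₁)) ≠ 0 :=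
        ne_of_gt hBpos
      have h2 := congrArg (fun z => z *
        pr μ (fun ω' => (∀ i < k, A i ω' = A i ω₁) ∧ (∀ i ≤ k, L i ω' = L i ω₁))) hS
      simp only at h2
      rwa [div_mul_cancel₀ _ hPB, mul_assoc, div_mul_cancel₀ _ hPB] at h2
    have hPOS' : ∀ k, r ≤ k → k ≤ t → ∀ ω₁ : Ω, 0 < μ ω₁ →
        0 < cpr μ (fun ω' => A k ω' = A k ω)
          (fun ω' => (∀ i < k, A i ω' = A i ω₁) ∧ (∀ i ≤ k, L i ω' = L i ω₁)) :=
      fun k hk1 hk2 ω₁ hω₁ => POS k hk1 hk2 (A k ω) ω₁ hω₁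
    have hval' : ∀ k, r ≤ k → k ≤ t → ∀ ω₁ ω' : Ω,
        ((∀ i < k, A i ω' = A i ω₁) ∧ (∀ i ≤ k, L i ω' = L i ω₁)) → A k ω' = A k ω →
        cpr μ (fun ω'' => A k ω'' = A k ω')
          (fun ω'' => (∀ i < k, A i ω'' = A i ω') ∧ (∀ i ≤ k, L i ω'' = L i ω'))
        = cpr μ (fun ω'' => A k ω'' = A k ω)
          (fun ω'' => (∀ i < k, A i ω'' = A i ω₁) ∧ (∀ i ≤ k, L i ω'' = L i ω₁)) := by
      intro k _ _ ω₁ ω' hB' hAk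
      refine Aux16.cpr_congr μ (fun ω'' => by rw [hAk]) (fun ω'' => ?_)
      constructor
      · rintro ⟨h1, h2⟩
        exact ⟨fun i hi => (h1 i hi).trans (hB'.1 i hi),
          fun i hi => (h2 i hi).trans (hB'.2 i hi)⟩
      · rintro ⟨h1, h2⟩
        exact ⟨fun i hi => (h1 i hi).trans (hB'.1 i hi).symm,
          fun i hi => (h2 i hi).trans (hB'.2 i hi).symm⟩
    have hcongr' : ∀ j, r ≤ j → j ≤ t → ∀ ω₁ ω' : Ω, (∀ i ≤ j, A i ω' = A i ω₁) →
        (∀ i ≤ j, L i ω' = L i ω₁) →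
        cpr μ (fun ω'' => A j ω'' = A j ω')
          (fun ω'' => (∀ i < j, A i ω'' = A i ω') ∧ (∀ i ≤ j, L i ω'' = L i ω'))
        = cpr μ (fun ω'' => A j ω'' = A j ω₁)
          (fun ω'' => (∀ i < j, A i ω'' = A i ω₁) ∧ (∀ i ≤ j, L i ω'' = L i ω₁)) := by
      intro j _ _ ω₁ ω' hA2 hL2
      refine Aux16.cpr_congr μ (fun ω'' => by rw [hA2 j (le_refl j)]) (fun ω'' => ?_)
      constructor
      · rintro ⟨h1, h2⟩
        exact ⟨fun i hi => (h1 i hi).trans (hA2 i (le_of_lt hi)),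
          fun i hi => (h2 i hi).trans (hL2 i hi)⟩
      · rintro ⟨h1, h2⟩
        exact ⟨fun i hi => (h1 i hi).trans (hA2 i (le_of_lt hi)).symm,
          fun i hi => (h2 i hi).trans (hL2 i hi).symm⟩
    have hbig := Aux16.pattern_zero (ξ := (ℕ → 𝒜) → ℕ → ℒ) μ hμ A L
      (fun ω'' (ar : ℕ → 𝒜) (jj : ℕ) => CL ar jj ω'') r t hrt (fun j => A j ω)
      (fun j ω'' => cpr μ (fun ω' => A j ω' = A j ω'')
        (fun ω' => (∀ i < j, A i ω' = A i ω'') ∧ (∀ i ≤ j, L i ω' = L i ω'')))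
      (fun ω' => (hstar (fun j => A j ω) (V ω') *
        ∏ j ∈ Finset.Ico r (t + 1), gstar j (A j ω) (fun j => A j ω) (V ω')) *
        (Y (CL (fun i => if i < r then A i ω' else A i ω) (t + 1) ω') -
          m (fun j => A j ω) (V ω')))
      hbase hΦm hSRA' hPOS' hval' hcongr'
    have hbig2 : (∑ ω', (if ∀ j, r ≤ j → j < t + 1 → A j ω' = A j ω then (1:ℝ) else 0) *
        ((hstar (fun j => A j ω) (V ω') *
          ∏ j ∈ Finset.Ico r (t + 1), gstar j (A j ω) (fun j => A j ω) (V ω')) *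
          (Y (CL (fun i => if i < r then A i ω' else A i ω) (t + 1) ω') -
            m (fun j => A j ω) (V ω'))) /
        (∏ j ∈ Finset.Ico r (t + 1), cpr μ (fun ω'' => A j ω'' = A j ω')
          (fun ω'' => (∀ i < j, A i ω'' = A i ω') ∧ (∀ i ≤ j, L i ω'' = L i ω'))) * μ ω')
        = 0 := hbig
    have c2 : cex μ (fun ω' => hstar (fun i => A i ω') (V ω') *
          (∏ j ∈ Finset.Ico r (t + 1), gstar j (A j ω') (fun i => A i ω') (V ω')) /
          (∏ j ∈ Finset.Ico r (t + 1), cpr μ (fun ω'' => A j ω'' = A j ω')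
            (fun ω'' => (∀ i < j, A i ω'' = A i ω') ∧ (∀ i ≤ j, L i ω'' = L i ω'))) *
          (Y (L (t + 1) ω') - m (fun i => A i ω') (V ω')))
          (fun ω' => ∀ j, r ≤ j → j < t + 1 → A j ω' = A j ω)
        = cex μ (fun ω' => ((hstar (fun j => A j ω) (V ω') *
            ∏ j ∈ Finset.Ico r (t + 1), gstar j (A j ω) (fun j => A j ω) (V ω')) *
            (Y (CL (fun i => if i < r then A i ω' else A i ω) (t + 1) ω') -
              m (fun j => A j ω) (V ω'))) /
          (∏ j ∈ Finset.Ico r (t + 1), cpr μ (fun ω'' => A j ω'' = A j ω')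
            (fun ω'' => (∀ i < j, A i ω'' = A i ω') ∧ (∀ i ≤ j, L i ω'' = L i ω'))))
          (fun ω' => ∀ j, r ≤ j → j < t + 1 → A j ω' = A j ω) := by
      refine Aux16.cex_congr μ fun ω' hR => ?_
      have hAeq : ∀ j, r ≤ j → j < t + 1 → A j ω' = A j ω := hR
      have e_h : hstar (fun i => A i ω') (V ω') = hstar (fun j => A j ω) (V ω') :=
        hhstar _ _ _ (fun i h1 h2 => hAeq i h1 (by omega))
      have e_g : (∏ j ∈ Finset.Ico r (t + 1), gstar j (A j ω') (fun i => A i ω') (V ω'))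
          = ∏ j ∈ Finset.Ico r (t + 1), gstar j (A j ω) (fun j => A j ω) (V ω') := by
        refine Finset.prod_congr rfl fun j hj => ?_
        obtain ⟨hj1, hj2⟩ := Finset.mem_Ico.mp hj
        rw [hAeq j hj1 hj2]
        exact hgstar_dep j (A j ω) _ _ _ (fun i h1 h2 => hAeq i h1 (by omega))
      have e_y : Y (L (t + 1) ω') = Y (CL (fun i => if i < r then A i ω' else A i ω) (t + 1) ω') := by
        rw [hcons (t + 1) ω']
        refine congrArg Y (hTO _ _ (t + 1) (fun i hi => ?_) ω')
        by_cases h : i < r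
        · rw [if_pos h]
        · rw [if_neg h]
          exact hAeq i (by omega) hi
      have e_m : m (fun i => A i ω') (V ω') = m (fun j => A j ω) (V ω') :=
        hm _ _ _ (fun i h1 h2 => hAeq i h1 (by omega))
      rw [e_h, e_g, e_y, e_m, div_mul_eq_mul_div]
    rw [c2]
    refine Aux16.cex_eq_zero μ ?_
    refine Eq.trans (Finset.sum_congr rfl fun ω' _ => ?_) hbig2
    beta_reduce
    by_cases h : ∀ j, r ≤ j → j < t + 1 → A j ω' = A j ω
    · rw [if_pos h, if_pos h, one_mul]
    · rw [if_neg h, if_neg h, zero_mul, zero_div, zero_mul]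
end
end
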